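/- Let F₁, F₂, L₂ be distributions on ℝ such that \bar{F₂}(x) ~ \bar{L₂}(x) as x → ∞ and the convolution F₁ * F₂ is long-tailed. Then \overline{F₁ * L₂}(x) ~ \overline{F₁ * F₂}(x) as x → ∞, and consequently F₁ * L₂ is long-tailed. -/

import Mathlib

open MeasureTheory Filter Set Asymptotics

/-- Tail function of a distribution: `F̄(x) = μ(x, ∞)`. -/
noncomputable def tail (μ : Measure ℝ) (x : ℝ) : ℝ := (μ (Set.Ioi x)).toReal

/-- `F(a, b] = F(b) - F(a)`. -/
noncomputable def intv (μ : Measure ℝ) (a b : ℝ) : ℝ := (μ (Set.Ioc a b)).toReal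

/-- A distribution is long-tailed if `F̄(x+1)/F̄(x) → 1` as `x → ∞`. -/
def LongTailed (μ : Measure ℝ) : Prop :=
  Tendsto (fun x => tail μ (x + 1) / tail μ x) atTop (nhds 1)

/-- Convolution of two distributions on ℝ (law of the sum of independent rvs). -/
noncomputable def mconv (μ ν : Measure ℝ) : Measure ℝ :=
  Measure.map (fun p : ℝ × ℝ => p.1 + p.2) (μ.prod ν)

/-- `n`-fold convolution of a distribution with itself; `nconv μ 0` is the unit mass at 0. -/
noncomputable def nconv (μ : Measure ℝ) : ℕ → Measure ℝ
  | 0 => Measure.dirac 0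
  | n + 1 => mconv (nconv μ n) μ



section StmtAux

lemma tail_nonneg (μ : Measure ℝ) (x : ℝ) : 0 ≤ tail μ x := ENNReal.toReal_nonneg

lemma tail_anti (μ : Measure ℝ) [IsFiniteMeasure μ] : Antitone (tail μ) := fun a b hab =>
  ENNReal.toReal_mono (measure_ne_top μ _) (measure_mono (Ioi_subset_Ioi hab))

lemma tail_le_one (μ : Measure ℝ) [IsProbabilityMeasure μ] (x : ℝ) : tail μ x ≤ 1 := by
  have := measure_mono (subset_univ (Ioi x)) (μ := μ)
  simpa [tail] using ENNReal.toReal_mono (by simp) this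

instance mconv_prob (μ ν : Measure ℝ) [IsProbabilityMeasure μ] [IsProbabilityMeasure ν] :
    IsProbabilityMeasure (mconv μ ν) :=
  Measure.isProbabilityMeasure_map (measurable_fst.add measurable_snd).aemeasurable

lemma mconv_apply_Ioi (μ ν : Measure ℝ) [SFinite ν] (x : ℝ) :
    mconv μ ν (Ioi x) = ∫⁻ y, ν (Ioi (x - y)) ∂μ := by
  rw [mconv, Measure.map_apply (show Measurable fun p : ℝ × ℝ => p.1 + p.2 from measurable_fst.add measurable_snd) measurableSet_Ioi,
    Measure.prod_apply ((show Measurable fun p : ℝ × ℝ => p.1 + p.2 from measurable_fst.add measurable_snd) measurableSet_Ioi)]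
  refine lintegral_congr fun y => ?_
  congr 1
  ext z
  simp [mem_Ioi, sub_lt_iff_lt_add']

lemma exists_tail_large (μ : Measure ℝ) [IsProbabilityMeasure μ] {ε : ℝ} (hε : 0 < ε) (hε1 : ε < 1) :
    ∃ b : ℝ, b ≤ 0 ∧ 1 - ε ≤ tail μ b := by
  have hmono : Monotone (fun n : ℕ => Ioi (-(n:ℝ))) := fun m n hmn => Ioi_subset_Ioi (neg_le_neg (by exact_mod_cast hmn))
  have hU : (⋃ n : ℕ, Ioi (-(n:ℝ))) = univ := by
    ext x; simp only [mem_iUnion, mem_Ioi, mem_univ, iff_true]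
    obtain ⟨n, hn⟩ := exists_nat_gt (-x)
    exact ⟨n, by linarith⟩
  have ht := tendsto_measure_iUnion_atTop hmono (μ := μ)
  rw [hU] at ht
  simp only [measure_univ] at ht
  have hlt : ENNReal.ofReal (1 - ε) < 1 := by
    rw [← ENNReal.ofReal_one]
    exact ENNReal.ofReal_lt_ofReal_iff_of_nonneg (by linarith) |>.mpr (by linarith)
  have := ht.eventually_const_lt hlt
  obtain ⟨n, hn⟩ := this.exists
  refine ⟨-(n:ℝ), by simp, ?_⟩
  have : ENNReal.ofReal (1 - ε) ≤ μ (Ioi (-(n:ℝ))) := hn.le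
  calc 1 - ε = (ENNReal.ofReal (1-ε)).toReal := by rw [ENNReal.toReal_ofReal]; linarith
  _ ≤ tail μ (-(n:ℝ)) := ENNReal.toReal_mono (measure_ne_top _ _) this

lemma tail_mconv_le (μ ν η : Measure ℝ) [IsProbabilityMeasure μ] [IsProbabilityMeasure ν]
    [IsProbabilityMeasure η] {K c : ℝ} (hK : 0 ≤ K)
    (h : ∀ w, tail ν w ≤ K * tail η (w - c)) (x : ℝ) :
    tail (mconv μ ν) x ≤ K * tail (mconv μ η) (x - c) := by
  have h1 : mconv μ ν (Ioi x) ≤ ENNReal.ofReal K * mconv μ η (Ioi (x - c)) := by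
    rw [mconv_apply_Ioi, mconv_apply_Ioi,
      ← lintegral_const_mul' _ _ ENNReal.ofReal_ne_top]
    refine lintegral_mono fun y => ?_
    have h2 : ν (Ioi (x - y)) = ENNReal.ofReal (tail ν (x - y)) :=
      (ENNReal.ofReal_toReal (measure_ne_top _ _)).symm
    have h3 : η (Ioi (x - c - y)) = ENNReal.ofReal (tail η (x - y - c)) := by
      rw [show x - c - y = x - y - c by ring]
      exact (ENNReal.ofReal_toReal (measure_ne_top _ _)).symm
    rw [h2, h3, ← ENNReal.ofReal_mul hK]
    exact ENNReal.ofReal_le_ofReal (h (x - y))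
  have h4 : (ENNReal.ofReal K * mconv μ η (Ioi (x - c))).toReal
      = K * tail (mconv μ η) (x - c) := by
    rw [ENNReal.toReal_mul, ENNReal.toReal_ofReal hK]; rfl
  calc tail (mconv μ ν) x ≤ (ENNReal.ofReal K * mconv μ η (Ioi (x - c))).toReal :=
        ENNReal.toReal_mono (ENNReal.mul_ne_top ENNReal.ofReal_ne_top (measure_ne_top _ _)) h1
    _ = _ := h4

section shift
variable {T : ℝ → ℝ} (hpos : ∀ x, 0 < T x) (hanti : Antitone T)
  (hL : Tendsto (fun x => T (x + 1) / T x) atTop (nhds 1))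

include hpos hL in
lemma shift_nat (n : ℕ) : Tendsto (fun x => T (x + n) / T x) atTop (nhds 1) := by
  induction n with
  | zero =>
    have he : (fun x => T (x + (0:ℕ)) / T x) = fun _ => (1:ℝ) := funext fun x => by
      simp [div_self (hpos x).ne']
    rw [he]; exact tendsto_const_nhds
  | succ n ih =>
    have h1 : Tendsto (fun x => T (x + n + 1) / T (x + n)) atTop (nhds 1) :=
      hL.comp (tendsto_atTop_add_const_right _ (n : ℝ) tendsto_id)
    have := h1.mul ih
    rw [mul_one] at this
    refine this.congr fun x => ?_
    rw [div_mul_div_cancel₀ (hpos (x + n)).ne']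
    push_cast
    ring_nf

include hpos hanti hL in
lemma shift_plus {c : ℝ} (hc : 0 ≤ c) : Tendsto (fun x => T (x + c) / T x) atTop (nhds 1) := by
  obtain ⟨n, hn⟩ := exists_nat_ge c
  refine tendsto_of_tendsto_of_tendsto_of_le_of_le (shift_nat hpos hL n)
    (tendsto_const_nhds) (fun x => ?_) (fun x => ?_)
  · exact (div_le_div_iff_of_pos_right (hpos x)).mpr (hanti (by linarith))
  · exact div_le_one_of_le₀ (hanti (by linarith)) (hpos x).le

include hpos hanti hL in
lemma shift_minus {c : ℝ} (hc : 0 ≤ c) : Tendsto (fun x => T (x - c) / T x) atTop (nhds 1) := by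
  obtain ⟨n, hn⟩ := exists_nat_ge c
  have h1 : Tendsto (fun x => T (x - n) / T x) atTop (nhds 1) := by
    have h2 := (shift_nat hpos hL n).comp (tendsto_atTop_add_const_right _ (-(n:ℝ)) tendsto_id)
    have h3 : Tendsto (fun x => T x / T (x - n)) atTop (nhds 1) := by
      refine h2.congr fun x => ?_
      simp only [Function.comp, id]
      congr 2 <;> ring
    have := h3.inv₀ one_ne_zero
    rw [inv_one] at this
    refine this.congr fun x => ?_
    rw [← one_div, one_div_div]
  refine tendsto_of_tendsto_of_tendsto_of_le_of_le tendsto_const_nhds h1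
    (fun x => ?_) (fun x => ?_)
  · exact (one_le_div (hpos x)).mpr (hanti (by linarith))
  · exact (div_le_div_iff_of_pos_right (hpos x)).mpr (hanti (by linarith))
end shift

lemma T_pos {T : ℝ → ℝ} (hnn : ∀ x, 0 ≤ T x) (hanti : Antitone T)
    (hL : Tendsto (fun x => T (x + 1) / T x) atTop (nhds 1)) : ∀ x, 0 < T x := by
  by_contra h
  push_neg at h
  obtain ⟨x₀, hx₀⟩ := h
  have hz : ∀ x ≥ x₀, T x = 0 := fun x hx => le_antisymm ((hanti hx).trans hx₀) (hnn x)
  have he : (fun x => T (x + 1) / T x) =ᶠ[atTop] fun _ => (0:ℝ) := by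
    filter_upwards [eventually_ge_atTop x₀] with x hx
    rw [hz x hx, div_zero]
  have : Tendsto (fun _ : ℝ => (0:ℝ)) atTop (nhds 1) := hL.congr' he
  exact one_ne_zero (α := ℝ) (tendsto_nhds_unique this tendsto_const_nhds)

lemma domination (F₂ L₂ : Measure ℝ) [IsProbabilityMeasure F₂] [IsProbabilityMeasure L₂]
    (hequiv : Tendsto (fun x => tail F₂ x / tail L₂ x) atTop (nhds 1))
    {ε : ℝ} (hε : 0 < ε) (hε1 : ε < 1) :
    ∃ c : ℝ, 0 ≤ c ∧ (∀ w, tail F₂ w ≤ (1 - ε)⁻¹ * tail L₂ (w - c)) ∧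
      (∀ w, tail L₂ w ≤ (1 - ε)⁻¹ * tail F₂ (w - c)) := by
  have hK : (0:ℝ) < (1 - ε)⁻¹ := inv_pos.mpr (by linarith)
  have hinv : (1 - ε) * (1 - ε)⁻¹ = 1 := mul_inv_cancel₀ (by linarith)
  have hKge : 1 + ε ≤ (1 - ε)⁻¹ := by nlinarith
  have hKge1 : 1 ≤ (1 - ε)⁻¹ := by linarith
  have hev : ∀ᶠ w in atTop, |tail F₂ w / tail L₂ w - 1| < ε := by
    have := Metric.tendsto_nhds.mp hequiv ε hε
    simpa [Real.dist_eq] using this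
  obtain ⟨t, ht⟩ := eventually_atTop.mp hev
  have hcomp : ∀ w ≥ t, tail F₂ w ≤ (1 - ε)⁻¹ * tail L₂ w ∧
      tail L₂ w ≤ (1 - ε)⁻¹ * tail F₂ w := by
    intro w hw
    have h1 := ht w hw
    rw [abs_sub_lt_iff] at h1
    have hLpos : 0 < tail L₂ w := by
      rcases (tail_nonneg L₂ w).lt_or_eq with h | h
      · exact h
      · exfalso
        rw [← h, div_zero] at h1
        linarith [h1.2]
    have hF : tail F₂ w = (tail F₂ w / tail L₂ w) * tail L₂ w :=
      (div_mul_cancel₀ _ hLpos.ne').symm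
    have h2a : (1 - ε) * tail L₂ w ≤ tail F₂ w := by nlinarith [h1.2, hLpos]
    have h2b : tail F₂ w ≤ (1 + ε) * tail L₂ w := by nlinarith [h1.1, hLpos]
    constructor
    · exact h2b.trans (mul_le_mul_of_nonneg_right hKge hLpos.le)
    · calc tail L₂ w = (1 - ε)⁻¹ * ((1 - ε) * tail L₂ w) := by
            rw [← mul_assoc, mul_comm ((1-ε)⁻¹) (1-ε), hinv, one_mul]
        _ ≤ (1 - ε)⁻¹ * tail F₂ w := mul_le_mul_of_nonneg_left h2a hK.le
  obtain ⟨b₁, hb₁0, hb₁⟩ := exists_tail_large F₂ hε hε1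
  obtain ⟨b₂, hb₂0, hb₂⟩ := exists_tail_large L₂ hε hε1
  set b := min b₁ b₂ with hb
  have hbF : 1 - ε ≤ tail F₂ b := hb₁.trans (tail_anti F₂ (min_le_left _ _))
  have hbL : 1 - ε ≤ tail L₂ b := hb₂.trans (tail_anti L₂ (min_le_right _ _))
  set c := max (t - b) 0 with hc
  have hc0 : 0 ≤ c := le_max_right _ _
  have hctb : t - b ≤ c := le_max_left _ _
  refine ⟨c, hc0, fun w => ?_, fun w => ?_⟩
  · rcases le_or_gt t w with hw | hw
    · calc tail F₂ w ≤ (1 - ε)⁻¹ * tail L₂ w := (hcomp w hw).1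
        _ ≤ (1 - ε)⁻¹ * tail L₂ (w - c) :=
          mul_le_mul_of_nonneg_left (tail_anti L₂ (by linarith)) hK.le
    · have hwb : w - c ≤ b := by linarith
      calc tail F₂ w ≤ 1 := tail_le_one F₂ w
        _ = (1 - ε)⁻¹ * (1 - ε) := by rw [mul_comm]; exact hinv.symm
        _ ≤ (1 - ε)⁻¹ * tail L₂ (w - c) :=
          mul_le_mul_of_nonneg_left (hbL.trans (tail_anti L₂ hwb)) hK.le
  · rcases le_or_gt t w with hw | hw
    · calc tail L₂ w ≤ (1 - ε)⁻¹ * tail F₂ w := (hcomp w hw).2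
        _ ≤ (1 - ε)⁻¹ * tail F₂ (w - c) :=
          mul_le_mul_of_nonneg_left (tail_anti F₂ (by linarith)) hK.le
    · have hwb : w - c ≤ b := by linarith
      calc tail L₂ w ≤ 1 := tail_le_one L₂ w
        _ = (1 - ε)⁻¹ * (1 - ε) := by rw [mul_comm]; exact hinv.symm
        _ ≤ (1 - ε)⁻¹ * tail F₂ (w - c) :=
          mul_le_mul_of_nonneg_left (hbF.trans (tail_anti F₂ hwb)) hK.le

end StmtAux

/-- If tail F2 is asymptotically equivalent to tail L2 and F1 * F2 is long-tailed, then
the tail of F1 * L2 is asymptotically equivalent to that of F1 * F2, and consequently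
F1 * L2 is long-tailed. -/
theorem stmt7 (F₁ F₂ L₂ : Measure ℝ)
    [IsProbabilityMeasure F₁] [IsProbabilityMeasure F₂] [IsProbabilityMeasure L₂]
    (hequiv : Tendsto (fun x => tail F₂ x / tail L₂ x) atTop (nhds 1))
    (hL : LongTailed (mconv F₁ F₂)) :
    Tendsto (fun x => tail (mconv F₁ L₂) x / tail (mconv F₁ F₂) x) atTop (nhds 1) ∧
      LongTailed (mconv F₁ L₂) := by
  set S := tail (mconv F₁ L₂) with hS
  set T := tail (mconv F₁ F₂) with hT
  have hTanti : Antitone T := tail_anti _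
  have hSanti : Antitone S := tail_anti _
  have hLT : Tendsto (fun x => T (x + 1) / T x) atTop (nhds 1) := hL
  have hTpos : ∀ x, 0 < T x := T_pos (fun x => tail_nonneg _ x) hTanti hLT
  -- bounds from domination for a given ε
  have key : ∀ ε : ℝ, 0 < ε → ε < 1 → ∃ c : ℝ, 0 ≤ c ∧
      (∀ x, S x ≤ (1 - ε)⁻¹ * T (x - c)) ∧ (∀ x, (1 - ε) * T (x + c) ≤ S x) := by
    intro ε hε hε1
    obtain ⟨c, hc0, hFL, hLF⟩ := domination F₂ L₂ hequiv hε hε1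
    refine ⟨c, hc0, fun x => tail_mconv_le F₁ L₂ F₂ (le_of_lt (inv_pos.mpr (by linarith))) hLF x, fun x => ?_⟩
    have h1 := tail_mconv_le F₁ F₂ L₂ (le_of_lt (inv_pos.mpr (by linarith))) hFL (x + c)
    rw [add_sub_cancel_right] at h1
    have h2 : (1 - ε) * T (x + c) ≤ (1 - ε) * ((1 - ε)⁻¹ * S x) :=
      mul_le_mul_of_nonneg_left h1 (by linarith)
    rwa [← mul_assoc, mul_inv_cancel₀ (by linarith : (1:ℝ) - ε ≠ 0), one_mul] at h2
  have hSpos : ∀ x, 0 < S x := by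
    intro x
    obtain ⟨c, hc0, _, hlb⟩ := key (1/2) (by norm_num) (by norm_num)
    have := hlb x
    have := hTpos (x + c)
    linarith
  have hmain : Tendsto (fun x => S x / T x) atTop (nhds 1) := by
    rw [Metric.tendsto_nhds]
    intro δ hδ
    set ε := min (δ/8) (1/2) with hεdef
    have hε : 0 < ε := lt_min (by linarith) (by norm_num)
    have hε1 : ε < 1 := lt_of_le_of_lt (min_le_right _ _) (by norm_num)
    have hεhalf : ε ≤ 1/2 := min_le_right _ _
    have hεδ : ε ≤ δ/8 := min_le_left _ _
    obtain ⟨c, hc0, hub, hlb⟩ := key ε hε hε1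
    have hKpos : (0:ℝ) < (1 - ε)⁻¹ := inv_pos.mpr (by linarith)
    have hinv : (1 - ε) * (1 - ε)⁻¹ = 1 := mul_inv_cancel₀ (by linarith)
    have hKle : (1 - ε)⁻¹ ≤ 1 + 2*ε := by nlinarith
    have hm := Metric.tendsto_nhds.mp (shift_minus hTpos hTanti hLT hc0) ε hε
    have hp := Metric.tendsto_nhds.mp (shift_plus hTpos hTanti hLT hc0) ε hε
    filter_upwards [hm, hp] with x hmx hpx
    rw [Real.dist_eq] at hmx hpx ⊢
    rw [abs_sub_lt_iff] at hmx hpx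
    have hTx := hTpos x
    have hratio_ub : S x / T x ≤ (1 - ε)⁻¹ * (T (x - c) / T x) := by
      rw [div_le_iff₀ hTx, mul_assoc, div_mul_cancel₀ _ hTx.ne']
      exact hub x
    have hratio_lb : (1 - ε) * (T (x + c) / T x) ≤ S x / T x := by
      rw [le_div_iff₀ hTx, mul_assoc, div_mul_cancel₀ _ hTx.ne']
      exact hlb x
    have h1 : T (x - c) / T x < 1 + ε := by linarith [hmx.1]
    have h2 : 1 - ε < T (x + c) / T x := by linarith [hpx.2]
    have hub2 : S x / T x ≤ (1 + 2*ε) * (1 + ε) := by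
      have : (1 - ε)⁻¹ * (T (x - c) / T x) ≤ (1 + 2*ε) * (1 + ε) := by
        have hd : (0:ℝ) ≤ T (x - c) / T x := div_nonneg (tail_nonneg _ _) hTx.le
        nlinarith
      linarith
    have hlb2 : (1 - ε) * (1 - ε) ≤ S x / T x := by
      have : (1 - ε) * (1 - ε) ≤ (1 - ε) * (T (x + c) / T x) := by nlinarith
      linarith
    rw [abs_sub_lt_iff]
    constructor <;> nlinarith
  refine ⟨hmain, ?_⟩
  have h1 : Tendsto (fun x => S (x + 1) / T (x + 1)) atTop (nhds 1) :=
    hmain.comp (tendsto_atTop_add_const_right _ (1:ℝ) tendsto_id)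
  have h3 : Tendsto (fun x => T x / S x) atTop (nhds 1) := by
    have := hmain.inv₀ one_ne_zero
    rw [inv_one] at this
    refine this.congr fun x => ?_
    rw [← one_div, one_div_div]
  have := (h1.mul hLT).mul h3
  rw [mul_one, mul_one] at this
  refine this.congr fun x => ?_
  rw [div_mul_div_cancel₀ (hTpos (x+1)).ne', div_mul_div_cancel₀ (hTpos x).ne']
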